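/- Let (Y₁, Y₂) be a centered bivariate Gaussian vector with unit variances and correlation σ ∈ [-1, 1], and set Z₁ = sign(Y₁), Z₂ = sign(Y₂) (with values in {-1, +1}). Then E[Z₁ Z₂] = (2/π) arcsin(σ). -/

import Mathlib

open Real MeasureTheory ProbabilityTheory Set
open scoped NNReal ENNReal

noncomputable def Sg : ℝ → ℝ := fun y => if 0 ≤ y then 1 else -1
lemma Sg_meas : Measurable Sg := by
  unfold Sg
  exact Measurable.ite (measurableSet_le measurable_const measurable_id) measurable_const
    measurable_const
lemma Sg_abs (y : ℝ) : ‖Sg y‖ ≤ 1 := by unfold Sg; split <;> simp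
lemma Sg_smul {r : ℝ} (hr : 0 < r) (y : ℝ) : Sg (r * y) = Sg y := by
  unfold Sg
  rcases le_or_gt 0 y with h | h
  · simp [h, mul_nonneg hr.le h]
  · simp [h.not_ge, not_le.2 (mul_neg_of_pos_of_neg hr h)]

lemma Sg_pos {y : ℝ} (h : 0 ≤ y) : Sg y = 1 := by simp [Sg, h]
lemma Sg_neg {y : ℝ} (h : y < 0) : Sg y = -1 := by simp [Sg, h.not_ge]
lemma integral_eq_const_of_Ioo {f : ℝ → ℝ} {a b c : ℝ} (hab : a ≤ b)
    (h : ∀ x ∈ Ioo a b, f x = c) : ∫ x in a..b, f x = c * (b - a) := by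
  rw [intervalIntegral.integral_of_le hab, integral_Ioc_eq_integral_Ioo,
    setIntegral_congr_fun measurableSet_Ioo h]
  simp [Real.volume_Ioo, ENNReal.toReal_ofReal (by linarith : (0:ℝ) ≤ b - a), mul_comm, hab]

lemma Sg_intervalIntegrable (σ : ℝ) (a b : ℝ) :
    IntervalIntegrable (fun u => Sg (Real.sin u + σ)) volume a b := by
  refine (intervalIntegrable_const (c := (1:ℝ))).mono_fun
    ((Sg_meas.comp ((Real.measurable_sin).add_const σ)).aestronglyMeasurable) ?_
  filter_upwards with x
  simpa using Sg_abs _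

lemma angular_core {α : ℝ} (h1 : -(π/2) ≤ α) (h2 : α ≤ π/2) :
    ∫ u in (-(π/2))..(3*π/2), Sg (Real.sin u + Real.sin α) = 4 * α := by
  have hπ := Real.pi_pos
  have key1 : ∫ u in (-(π/2))..(-α), Sg (Real.sin u + Real.sin α) = (-1) * (-α - -(π/2)) := by
    refine integral_eq_const_of_Ioo (by linarith) ?_
    intro x hx
    refine Sg_neg ?_
    have : Real.sin x < Real.sin (-α) := by
      refine Real.strictMonoOn_sin ⟨hx.1.le, by linarith [hx.2]⟩ ⟨by linarith, by linarith⟩ hx.2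
    rw [Real.sin_neg] at this
    linarith
  have key2 : ∫ u in (-α)..(π+α), Sg (Real.sin u + Real.sin α) = 1 * (π + α - -α) := by
    refine integral_eq_const_of_Ioo (by linarith) ?_
    intro x hx
    refine Sg_pos ?_
    have hlt : Real.sin (-α) < Real.sin x := by
      rcases le_or_gt x (π/2) with hle | hgt
      · exact Real.strictMonoOn_sin ⟨by linarith, by linarith⟩ ⟨by linarith [hx.1], hle⟩ hx.1
      · rw [← Real.sin_pi_sub x]
        refine Real.strictMonoOn_sin ⟨by linarith, by linarith⟩
          ⟨by linarith [hx.2], by linarith⟩ (by linarith [hx.2])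
    rw [Real.sin_neg] at hlt
    linarith
  have key3 : ∫ u in (π+α)..(3*π/2), Sg (Real.sin u + Real.sin α) = (-1) * (3*π/2 - (π+α)) := by
    refine integral_eq_const_of_Ioo (by linarith) ?_
    intro x hx
    refine Sg_neg ?_
    have : Real.sin x < Real.sin (-α) := by
      rw [← Real.sin_pi_sub x]
      refine Real.strictMonoOn_sin ⟨by linarith [hx.2], by linarith [hx.1]⟩
        ⟨by linarith, by linarith⟩ (by linarith [hx.1])
    rw [Real.sin_neg] at this
    linarith
  have split1 : ∫ u in (-α)..(3*π/2), Sg (Real.sin u + Real.sin α)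
      = (∫ u in (-α)..(π+α), Sg (Real.sin u + Real.sin α))
        + ∫ u in (π+α)..(3*π/2), Sg (Real.sin u + Real.sin α) :=
    (intervalIntegral.integral_add_adjacent_intervals (Sg_intervalIntegrable _ _ _)
      (Sg_intervalIntegrable _ _ _)).symm
  have split0 : ∫ u in (-(π/2))..(3*π/2), Sg (Real.sin u + Real.sin α)
      = (∫ u in (-(π/2))..(-α), Sg (Real.sin u + Real.sin α))
        + ∫ u in (-α)..(3*π/2), Sg (Real.sin u + Real.sin α) :=
    (intervalIntegral.integral_add_adjacent_intervals (Sg_intervalIntegrable _ _ _)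
      (Sg_intervalIntegrable _ _ _)).symm
  rw [split0, split1, key1, key2, key3]
  ring

lemma Sg_mul_Sg {a b : ℝ} (ha : a ≠ 0) (hb : b ≠ 0) : Sg a * Sg b = Sg (a * b) := by
  unfold Sg
  rcases ha.lt_or_gt with h | h <;> rcases hb.lt_or_gt with h' | h'
  · simp [h.not_ge, h'.not_ge, (mul_pos_of_neg_of_neg h h').le]
  · simp [h.not_ge, h'.le, (mul_neg_of_neg_of_pos h h').not_ge]
  · simp [h.le, h'.not_ge, (mul_neg_of_pos_of_neg h h').not_ge]
  · simp [h.le, h'.le, (mul_pos h h').le]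

lemma angular {σ : ℝ} (hσ1 : -1 ≤ σ) (hσ2 : σ ≤ 1) :
    ∫ θ in Ioo (-π) π,
      Sg (Real.cos θ) * Sg (σ * Real.cos θ + Real.sqrt (1 - σ^2) * Real.sin θ)
      = 4 * Real.arcsin σ := by
  have hπ := Real.pi_pos
  set α := Real.arcsin σ with hα
  have hα1 : -(π/2) ≤ α := Real.neg_pi_div_two_le_arcsin σ
  have hα2 : α ≤ π/2 := Real.arcsin_le_pi_div_two σ
  have hsα : Real.sin α = σ := Real.sin_arcsin hσ1 hσ2
  have hcα : Real.cos α = Real.sqrt (1 - σ^2) := Real.cos_arcsin σ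
  set B : Set ℝ := {θ | Real.cos θ = 0} ∪ {θ | Real.sin (θ + α) = 0} with hBdef
  have hB : volume B = 0 := by
    refine measure_union_null ?_ ?_
    · have hsub : {θ : ℝ | Real.cos θ = 0} ⊆ Set.range (fun k : ℤ => (2*(k:ℝ)+1)*π/2) := by
        intro θ hθ
        rcases Real.cos_eq_zero_iff.mp hθ with ⟨k, hk⟩
        exact ⟨k, hk.symm⟩
      exact measure_mono_null hsub ((Set.countable_range _).measure_zero _)
    · have hsub : {θ : ℝ | Real.sin (θ + α) = 0} ⊆ Set.range (fun k : ℤ => (k:ℝ)*π - α) := by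
        intro θ hθ
        rcases Real.sin_eq_zero_iff.mp hθ with ⟨k, hk⟩
        exact ⟨k, show (k:ℝ)*π - α = θ by linarith⟩
      exact measure_mono_null hsub ((Set.countable_range _).measure_zero _)
  have hpt : ∀ θ, θ ∉ B →
      Sg (Real.cos θ) * Sg (σ * Real.cos θ + Real.sqrt (1 - σ^2) * Real.sin θ)
        = Sg (Real.sin (2*θ+α) + σ) := by
    intro θ hθ
    simp only [hBdef, Set.mem_union, Set.mem_setOf_eq, not_or] at hθ
    obtain ⟨hcos, hsin⟩ := hθ
    have hexp : σ * Real.cos θ + Real.sqrt (1 - σ^2) * Real.sin θ = Real.sin (θ + α) := by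
      rw [Real.sin_add, hcα, hsα]; ring
    rw [hexp, Sg_mul_Sg hcos hsin]
    have h2 : Real.sin (2*θ+α) + σ = 2 * (Real.cos θ * Real.sin (θ + α)) := by
      have hps := Real.sin_sq_add_cos_sq θ
      rw [show 2*θ+α = θ + (θ+α) by ring, Real.sin_add θ (θ+α), Real.sin_add θ α,
        Real.cos_add θ α, ← hsα]
      linear_combination (-Real.sin α) * hps
    rw [h2, Sg_smul two_pos]
  have hcongr : ∫ θ in Ioo (-π) π,
      Sg (Real.cos θ) * Sg (σ * Real.cos θ + Real.sqrt (1 - σ^2) * Real.sin θ)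
      = ∫ θ in Ioo (-π) π, Sg (Real.sin (2*θ+α) + σ) := by
    refine setIntegral_congr_ae measurableSet_Ioo ?_
    have hae : ∀ᵐ θ : ℝ, θ ∉ B := by
      rw [ae_iff]
      simpa [not_not] using hB
    filter_upwards [hae] with θ hθ _ using hpt θ hθ
  rw [hcongr, ← integral_Ioc_eq_integral_Ioo,
    ← intervalIntegral.integral_of_le (by linarith : -π ≤ π)]
  have hsub := intervalIntegral.integral_comp_mul_add (a := -π) (b := π)
    (fun u => Sg (Real.sin u + σ)) two_ne_zero α
  rw [hsub]
  have hper : Function.Periodic (fun u => Sg (Real.sin u + σ)) (2*π) := by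
    intro u
    simp [Real.sin_add_two_pi]
  have hsplit : ∫ u in (2*(-π)+α)..(2*π+α), Sg (Real.sin u + σ)
      = (∫ u in (2*(-π)+α)..α, Sg (Real.sin u + σ))
        + ∫ u in α..(2*π+α), Sg (Real.sin u + σ) :=
    (intervalIntegral.integral_add_adjacent_intervals (Sg_intervalIntegrable _ _ _)
      (Sg_intervalIntegrable _ _ _)).symm
  have e1 : ∫ u in (2*(-π)+α)..α, Sg (Real.sin u + σ)
      = ∫ u in (-(π/2))..(3*π/2), Sg (Real.sin u + σ) := by
    have h := hper.intervalIntegral_add_eq (2*(-π)+α) (-(π/2))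
    rw [show 2*(-π)+α+2*π = α by ring, show -(π/2)+2*π = 3*π/2 by ring] at h
    exact h
  have e2 : ∫ u in α..(2*π+α), Sg (Real.sin u + σ)
      = ∫ u in (-(π/2))..(3*π/2), Sg (Real.sin u + σ) := by
    have h := hper.intervalIntegral_add_eq α (-(π/2))
    rw [show α+2*π = 2*π+α by ring, show -(π/2)+2*π = 3*π/2 by ring] at h
    exact h
  have hcore : ∫ u in (-(π/2))..(3*π/2), Sg (Real.sin u + σ) = 4 * α := by
    have := angular_core hα1 hα2
    rwa [hsα] at this
  rw [hsplit, e1, e2, hcore]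
  simp only [smul_eq_mul]
  ring

lemma radial : ∫ r in Ioi (0:ℝ), r * rexp (-(r^2) / 2) = 1 := by
  have hderiv : ∀ x ∈ Ici (0:ℝ), HasDerivAt (fun x : ℝ => -rexp (-(x^2)/2)) (x * rexp (-(x^2)/2)) x := by
    intro x _
    have h1 : HasDerivAt (fun x : ℝ => -(x^2)/2) (-x) x := by
      have := ((hasDerivAt_pow 2 x).neg).div_const 2
      simpa using this.congr_deriv (by ring)
    have := (h1.exp).fun_neg
    simpa [mul_comm] using this.congr_deriv (by ring)
  have hint : IntegrableOn (fun r : ℝ => r * rexp (-(r^2)/2)) (Ioi 0) := by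
    have := integrable_mul_exp_neg_mul_sq (b := (1:ℝ)/2) (by norm_num)
    refine (this.congr ?_).integrableOn
    filter_upwards with x
    ring_nf
  have htend : Filter.Tendsto (fun x : ℝ => -rexp (-(x^2)/2)) Filter.atTop (nhds 0) := by
    rw [← neg_zero]
    refine Filter.Tendsto.neg ?_
    refine Real.tendsto_exp_atBot.comp ?_
    apply Filter.Tendsto.atBot_div_const (by norm_num)
    exact Filter.tendsto_neg_atBot_iff.mpr (Filter.tendsto_pow_atTop (by norm_num))
  have := integral_Ioi_of_hasDerivAt_of_tendsto' hderiv hint htend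
  simp at this
  simpa using this

lemma gauss_int (g : ℝ → ℝ) :
    ∫ x, g x ∂(gaussianReal 0 1) = ∫ x, gaussianPDFReal 0 1 x * g x := by
  rw [gaussianReal_of_var_ne_zero 0 one_ne_zero]
  rw [show (gaussianPDF 0 1)
      = (fun x => ((Real.toNNReal (gaussianPDFReal 0 1 x) : ℝ≥0) : ℝ≥0∞)) from rfl]
  rw [integral_withDensity_eq_integral_smul (measurable_gaussianPDFReal 0 1).real_toNNReal g]
  congr 1
  ext x
  rw [NNReal.smul_def, Real.coe_toNNReal _ (gaussianPDFReal_nonneg 0 1 x), smul_eq_mul]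

lemma pdf_eq (x : ℝ) : gaussianPDFReal 0 1 x = (Real.sqrt (2*π))⁻¹ * rexp (-(x^2)/2) := by
  rw [gaussianPDFReal_def]
  norm_num

theorem stmt_5 (Ω : Type*) [MeasureSpace Ω] [IsProbabilityMeasure (ℙ : Measure Ω)]
    (X₁ X₂ : Ω → ℝ) (hm1 : Measurable X₁) (hm2 : Measurable X₂)
    (hindep : IndepFun X₁ X₂ ℙ)
    (h1 : Measure.map X₁ ℙ = gaussianReal 0 1)
    (h2 : Measure.map X₂ ℙ = gaussianReal 0 1)
    (σ : ℝ) (hσ : σ ∈ Set.Icc (-1 : ℝ) 1)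
    (sgn : ℝ → ℝ) (hsgn : ∀ y : ℝ, sgn y = if 0 ≤ y then 1 else -1) :
    ∫ ω, sgn (X₁ ω) * sgn (σ * X₁ ω + Real.sqrt (1 - σ ^ 2) * X₂ ω) ∂ℙ =
      (2 / π) * arcsin σ := by
  obtain ⟨hσ1, hσ2⟩ := hσ
  have hπ := Real.pi_pos
  have hsgn' : sgn = Sg := funext fun y => by rw [hsgn y]; rfl
  subst hsgn'
  set c : ℝ := Real.sqrt (1 - σ ^ 2) with hc
  set F : ℝ × ℝ → ℝ := fun p => Sg p.1 * Sg (σ * p.1 + c * p.2) with hF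
  have hFm : Measurable F :=
    (Sg_meas.comp measurable_fst).mul
      (Sg_meas.comp ((measurable_fst.const_mul σ).add (measurable_snd.const_mul c)))
  have hFb : ∀ p, ‖F p‖ ≤ 1 := by
    intro p
    rw [hF]
    calc ‖Sg p.1 * Sg (σ * p.1 + c * p.2)‖ = ‖Sg p.1‖ * ‖Sg (σ * p.1 + c * p.2)‖ := norm_mul _ _
    _ ≤ 1 * 1 := mul_le_mul (Sg_abs _) (Sg_abs _) (norm_nonneg _) zero_le_one
    _ = 1 := one_mul 1
  -- step 1: push to the product of Gaussians
  have hmap : Measure.map (fun ω => (X₁ ω, X₂ ω)) ℙ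
      = (gaussianReal 0 1).prod (gaussianReal 0 1) := by
    exact ((indepFun_iff_map_prod_eq_prod_map_map hm1.aemeasurable
      hm2.aemeasurable).mp hindep).trans (by rw [h1, h2])
  have step1 : ∫ ω, Sg (X₁ ω) * Sg (σ * X₁ ω + c * X₂ ω) ∂ℙ
      = ∫ p, F p ∂((gaussianReal 0 1).prod (gaussianReal 0 1)) := by
    rw [← hmap, integral_map (hm1.prodMk hm2).aemeasurable hFm.aestronglyMeasurable]
  -- step 2: product to iterated
  have hFi : Integrable F ((gaussianReal 0 1).prod (gaussianReal 0 1)) :=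
    (integrable_const (1:ℝ)).mono' hFm.aestronglyMeasurable (Filter.Eventually.of_forall hFb)
  have step2 : ∫ p, F p ∂((gaussianReal 0 1).prod (gaussianReal 0 1))
      = ∫ x, ∫ y, F (x, y) ∂(gaussianReal 0 1) ∂(gaussianReal 0 1) :=
    integral_prod F hFi
  -- step 3: densities
  set P : ℝ → ℝ := gaussianPDFReal 0 1 with hP
  have step3 : ∫ x, ∫ y, F (x, y) ∂(gaussianReal 0 1) ∂(gaussianReal 0 1)
      = ∫ x, ∫ y, P x * (P y * F (x, y)) ∂(volume : Measure ℝ) ∂(volume : Measure ℝ) := by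
    rw [gauss_int]
    congr 1
    ext x
    rw [gauss_int, ← integral_const_mul]
  -- step 4: iterated to ℝ² Lebesgue
  set H : ℝ × ℝ → ℝ := fun p => P p.1 * (P p.2 * F p) with hH
  have hPm : Measurable P := measurable_gaussianPDFReal 0 1
  have hPnn : ∀ x, 0 ≤ P x := gaussianPDFReal_nonneg 0 1
  have hHm : Measurable H :=
    (hPm.comp measurable_fst).mul ((hPm.comp measurable_snd).mul hFm)
  have hHi : Integrable H ((volume : Measure ℝ).prod (volume : Measure ℝ)) := by
    have hPP : Integrable (fun p : ℝ × ℝ => P p.1 * P p.2)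
        ((volume : Measure ℝ).prod (volume : Measure ℝ)) :=
      (integrable_gaussianPDFReal 0 1).mul_prod (integrable_gaussianPDFReal 0 1)
    refine hPP.mono' hHm.aestronglyMeasurable (Filter.Eventually.of_forall fun p => ?_)
    rw [hH]
    calc ‖P p.1 * (P p.2 * F p)‖ = P p.1 * (P p.2 * ‖F p‖) := by
          rw [norm_mul, norm_mul, Real.norm_of_nonneg (hPnn _), Real.norm_of_nonneg (hPnn _)]
    _ ≤ P p.1 * (P p.2 * 1) := by
          refine mul_le_mul_of_nonneg_left (mul_le_mul_of_nonneg_left (hFb p) (hPnn _)) (hPnn _)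
    _ = P p.1 * P p.2 := by ring
  have step4 : ∫ x, ∫ y, P x * (P y * F (x, y)) ∂(volume : Measure ℝ) ∂(volume : Measure ℝ)
      = ∫ p, H p ∂(volume : Measure (ℝ × ℝ)) := by
    rw [Measure.volume_eq_prod]
    exact (integral_integral hHi)
  -- step 5: polar coordinates
  have step5 : ∫ p, H p ∂(volume : Measure (ℝ × ℝ))
      = ∫ p in polarCoord.target,
          (p.1 * rexp (-(p.1^2)/2)) * ((2*π)⁻¹ * (Sg (Real.cos p.2)
            * Sg (σ * Real.cos p.2 + c * Real.sin p.2))) ∂(volume : Measure (ℝ × ℝ)) := by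
    rw [← integral_comp_polarCoord_symm H]
    refine setIntegral_congr_fun polarCoord.open_target.measurableSet fun p hp => ?_
    obtain ⟨hp1, hp2⟩ := hp
    simp only [mem_Ioi] at hp1
    have hsymm : polarCoord.symm p = (p.1 * Real.cos p.2, p.1 * Real.sin p.2) := rfl
    rw [hsymm, hH]
    have hPP : P (p.1 * Real.cos p.2) * P (p.1 * Real.sin p.2)
        = (2*π)⁻¹ * rexp (-(p.1^2)/2) := by
      rw [hP, pdf_eq, pdf_eq]
      have hsq : -((p.1 * Real.cos p.2)^2)/2 + -((p.1 * Real.sin p.2)^2)/2 = -(p.1^2)/2 := by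
        have := Real.sin_sq_add_cos_sq p.2
        nlinarith [this]
      rw [show (√(2*π))⁻¹ * rexp (-(p.1 * Real.cos p.2)^2/2)
            * ((√(2*π))⁻¹ * rexp (-(p.1 * Real.sin p.2)^2/2))
          = (√(2*π))⁻¹ * (√(2*π))⁻¹
            * (rexp (-(p.1 * Real.cos p.2)^2/2) * rexp (-(p.1 * Real.sin p.2)^2/2)) by ring]
      rw [← Real.exp_add, hsq, ← mul_inv, Real.mul_self_sqrt (by positivity : (0:ℝ) ≤ 2*π)]
    have hFpol : F (p.1 * Real.cos p.2, p.1 * Real.sin p.2)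
        = Sg (Real.cos p.2) * Sg (σ * Real.cos p.2 + c * Real.sin p.2) := by
      rw [hF]
      simp only
      rw [Sg_smul hp1]
      congr 1
      rw [show σ * (p.1 * Real.cos p.2) + c * (p.1 * Real.sin p.2)
          = p.1 * (σ * Real.cos p.2 + c * Real.sin p.2) by ring, Sg_smul hp1]
    simp only
    rw [hFpol, smul_eq_mul]
    rw [show P (p.1 * Real.cos p.2) * (P (p.1 * Real.sin p.2)
          * (Sg (Real.cos p.2) * Sg (σ * Real.cos p.2 + c * Real.sin p.2)))
        = P (p.1 * Real.cos p.2) * P (p.1 * Real.sin p.2)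
          * (Sg (Real.cos p.2) * Sg (σ * Real.cos p.2 + c * Real.sin p.2)) by ring, hPP]
    ring
  -- step 6: separate variables
  have step6 : ∫ p in polarCoord.target,
        (p.1 * rexp (-(p.1^2)/2)) * ((2*π)⁻¹ * (Sg (Real.cos p.2)
          * Sg (σ * Real.cos p.2 + c * Real.sin p.2))) ∂(volume : Measure (ℝ × ℝ))
      = (∫ r in Ioi (0:ℝ), r * rexp (-(r^2)/2))
        * ∫ θ in Ioo (-π) π, (2*π)⁻¹ * (Sg (Real.cos θ)
            * Sg (σ * Real.cos θ + c * Real.sin θ)) := by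
    rw [show polarCoord.target = Ioi (0:ℝ) ×ˢ Ioo (-π) π from rfl, Measure.volume_eq_prod]
    exact setIntegral_prod_mul (fun r => r * rexp (-(r^2)/2))
      (fun θ => (2*π)⁻¹ * (Sg (Real.cos θ) * Sg (σ * Real.cos θ + c * Real.sin θ))) _ _
  rw [step1, step2, step3, step4, step5, step6, radial, integral_const_mul, hc,
    angular hσ1 hσ2]
  field_simp
  ring
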